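/- If e = ẽ = 0, the maximal proper submodule of the Verma module of the Takiff superalgebra of gl(1|1) with highest weight (n,0,ñ,0) is the 3-dimensional subspace spanned by ψ⁻v, ψ̃⁻v, ψ̃⁻ψ⁻v, and the irreducible quotient is 1-dimensional. -/

import Mathlib

/-- A representation of the Takiff superalgebra `g̃l(1|1)` of `gl(1|1)` on a complex
vector space `V`: linear endomorphisms for the even generators `N, E, Ñ, Ẽ` and the odd
generators `ψ⁺, ψ⁻, ψ̃⁺, ψ̃⁻`, subject to all the (super)commutation relations:
`[N,ψ±] = ±ψ±`, `{ψ⁺,ψ⁻} = E`, `[N,ψ̃±] = [Ñ,ψ±] = ±ψ̃±`, `{ψ⁺,ψ̃⁻} = {ψ̃⁺,ψ⁻} = Ẽ`,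
with all remaining (super)brackets equal to zero. -/
structure TakiffGl11Rep (V : Type*) [AddCommGroup V] [Module ℂ V] where
  N : V →ₗ[ℂ] V
  E : V →ₗ[ℂ] V
  Nt : V →ₗ[ℂ] V
  Et : V →ₗ[ℂ] V
  pp : V →ₗ[ℂ] V
  pm : V →ₗ[ℂ] V
  tp : V →ₗ[ℂ] V
  tm : V →ₗ[ℂ] V
  rel_N_E : N ∘ₗ E = E ∘ₗ N
  rel_N_Nt : N ∘ₗ Nt = Nt ∘ₗ N
  rel_N_Et : N ∘ₗ Et = Et ∘ₗ N
  rel_E_Nt : E ∘ₗ Nt = Nt ∘ₗ E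
  rel_E_Et : E ∘ₗ Et = Et ∘ₗ E
  rel_Nt_Et : Nt ∘ₗ Et = Et ∘ₗ Nt
  rel_N_pp : N ∘ₗ pp - pp ∘ₗ N = pp
  rel_N_pm : N ∘ₗ pm - pm ∘ₗ N = -pm
  rel_N_tp : N ∘ₗ tp - tp ∘ₗ N = tp
  rel_N_tm : N ∘ₗ tm - tm ∘ₗ N = -tm
  rel_E_pp : E ∘ₗ pp = pp ∘ₗ E
  rel_E_pm : E ∘ₗ pm = pm ∘ₗ E
  rel_E_tp : E ∘ₗ tp = tp ∘ₗ E
  rel_E_tm : E ∘ₗ tm = tm ∘ₗ E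
  rel_Nt_pp : Nt ∘ₗ pp - pp ∘ₗ Nt = tp
  rel_Nt_pm : Nt ∘ₗ pm - pm ∘ₗ Nt = -tm
  rel_Nt_tp : Nt ∘ₗ tp = tp ∘ₗ Nt
  rel_Nt_tm : Nt ∘ₗ tm = tm ∘ₗ Nt
  rel_Et_pp : Et ∘ₗ pp = pp ∘ₗ Et
  rel_Et_pm : Et ∘ₗ pm = pm ∘ₗ Et
  rel_Et_tp : Et ∘ₗ tp = tp ∘ₗ Et
  rel_Et_tm : Et ∘ₗ tm = tm ∘ₗ Et
  rel_pp_pp : pp ∘ₗ pp = 0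
  rel_pm_pm : pm ∘ₗ pm = 0
  rel_tp_tp : tp ∘ₗ tp = 0
  rel_tm_tm : tm ∘ₗ tm = 0
  rel_pp_pm : pp ∘ₗ pm + pm ∘ₗ pp = E
  rel_pp_tp : pp ∘ₗ tp + tp ∘ₗ pp = 0
  rel_pp_tm : pp ∘ₗ tm + tm ∘ₗ pp = Et
  rel_pm_tp : pm ∘ₗ tp + tp ∘ₗ pm = Et
  rel_pm_tm : pm ∘ₗ tm + tm ∘ₗ pm = 0
  rel_tp_tm : tp ∘ₗ tm + tm ∘ₗ tp = 0

namespace TakiffGl11Rep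

variable {V : Type*} [AddCommGroup V] [Module ℂ V] (ρ : TakiffGl11Rep V)

/-- A submodule invariant under the action of `g̃l(1|1)`. -/
def Invariant (W : Submodule ℂ V) : Prop :=
  ∀ w ∈ W, ρ.N w ∈ W ∧ ρ.E w ∈ W ∧ ρ.Nt w ∈ W ∧ ρ.Et w ∈ W ∧
    ρ.pp w ∈ W ∧ ρ.pm w ∈ W ∧ ρ.tp w ∈ W ∧ ρ.tm w ∈ W

/-- `v` is a highest weight vector of weight `(n, e, ñ, ẽ)`: a nonzero simultaneous
eigenvector of the Cartan generators annihilated by the raising operators `ψ⁺, ψ̃⁺`. -/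
def IsHW (v : V) (n e nt et : ℂ) : Prop :=
  v ≠ 0 ∧ ρ.N v = n • v ∧ ρ.E v = e • v ∧ ρ.Nt v = nt • v ∧ ρ.Et v = et • v ∧
    ρ.pp v = 0 ∧ ρ.tp v = 0

/-- `(V, v)` is the Verma module of highest weight `(n, e, ñ, ẽ)`: `v` is a highest
weight vector of that weight, the lowering operators `ψ⁻, ψ̃⁻` act freely on `v`
(`v, ψ⁻v, ψ̃⁻v, ψ̃⁻ψ⁻v` are linearly independent), and `v` generates `V`. -/
def IsVerma (v : V) (n e nt et : ℂ) : Prop :=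
  ρ.IsHW v n e nt et ∧
  LinearIndependent ℂ ![v, ρ.pm v, ρ.tm v, ρ.tm (ρ.pm v)] ∧
  ∀ W : Submodule ℂ V, ρ.Invariant W → v ∈ W → W = ⊤

/-- The quadratic Casimir `Q₁ = NẼ + ÑE + ψ⁻ψ̃⁺ + ψ̃⁻ψ⁺`. -/
def Q₁ : V →ₗ[ℂ] V := ρ.N ∘ₗ ρ.Et + ρ.Nt ∘ₗ ρ.E + ρ.pm ∘ₗ ρ.tp + ρ.tm ∘ₗ ρ.pp

/-- The quadratic Casimir `Q₂ = ÑẼ + ψ̃⁻ψ̃⁺`. -/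
def Q₂ : V →ₗ[ℂ] V := ρ.Nt ∘ₗ ρ.Et + ρ.tm ∘ₗ ρ.tp

end TakiffGl11Rep


lemma map_mem_of_mem_span {V : Type*} [AddCommGroup V] [Module ℂ V]
    (f : V →ₗ[ℂ] V) (s : Set V) (W : Submodule ℂ V)
    (h : ∀ x ∈ s, f x ∈ W) : ∀ w ∈ Submodule.span ℂ s, f w ∈ W := by
  intro w hw
  have : Submodule.span ℂ s ≤ W.comap f := Submodule.span_le.mpr h
  exact this hw

/-- If `e = ẽ = 0`, the maximal proper submodule of the Verma module of the Takiff
superalgebra of `gl(1|1)` with highest weight `(n, 0, ñ, 0)` is the 3-dimensional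
subspace spanned by `ψ⁻v, ψ̃⁻v, ψ̃⁻ψ⁻v`, and the irreducible quotient is 1-dimensional. -/
theorem takiff_gl11_verma_atypical_structure {V : Type*} [AddCommGroup V] [Module ℂ V]
    (ρ : TakiffGl11Rep V) (v : V) (n nt : ℂ) (h : ρ.IsVerma v n 0 nt 0) :
    ρ.Invariant (Submodule.span ℂ {ρ.pm v, ρ.tm v, ρ.tm (ρ.pm v)}) ∧
    Module.finrank ℂ (Submodule.span ℂ {ρ.pm v, ρ.tm v, ρ.tm (ρ.pm v)}) = 3 ∧
    Submodule.span ℂ {ρ.pm v, ρ.tm v, ρ.tm (ρ.pm v)} ≠ ⊤ ∧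
    (∀ W : Submodule ℂ V, ρ.Invariant W → W ≠ ⊤ →
      W ≤ Submodule.span ℂ {ρ.pm v, ρ.tm v, ρ.tm (ρ.pm v)}) ∧
    Module.finrank ℂ (V ⧸ Submodule.span ℂ {ρ.pm v, ρ.tm v, ρ.tm (ρ.pm v)}) = 1 := by
  obtain ⟨⟨hv0, hNv, hEv, hNtv, hEtv, hppv, htpv⟩, hli, hgen⟩ := h
  rw [zero_smul] at hEv hEtv
  set a := ρ.pm v with ha
  set b := ρ.tm v with hb
  set c := ρ.tm a with hc
  -- pointwise consequences of the relations
  have pt : ∀ (f g k : V →ₗ[ℂ] V), f ∘ₗ g - g ∘ₗ f = k → ∀ x, f (g x) = g (f x) + k x := by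
    intro f g k hrel x
    have := LinearMap.congr_fun hrel x
    simp only [LinearMap.sub_apply, LinearMap.comp_apply] at this
    linear_combination (norm := module) this
  have ptc : ∀ (f g : V →ₗ[ℂ] V), f ∘ₗ g = g ∘ₗ f → ∀ x, f (g x) = g (f x) := by
    intro f g hrel x
    exact LinearMap.congr_fun hrel x
  have pta : ∀ (f g k : V →ₗ[ℂ] V), f ∘ₗ g + g ∘ₗ f = k → ∀ x, f (g x) = k x - g (f x) := by
    intro f g k hrel x
    have := LinearMap.congr_fun hrel x
    simp only [LinearMap.add_apply, LinearMap.comp_apply] at this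
    linear_combination (norm := module) this
  have pta' : ∀ (f g k : V →ₗ[ℂ] V), f ∘ₗ g + g ∘ₗ f = k → ∀ x, g (f x) = k x - f (g x) := by
    intro f g k hrel x
    have := LinearMap.congr_fun hrel x
    simp only [LinearMap.add_apply, LinearMap.comp_apply] at this
    linear_combination (norm := module) this
  -- actions on a = ψ⁻v
  have hNa : ρ.N a = (n-1) • a := by
    have := pt ρ.N ρ.pm (-ρ.pm) ρ.rel_N_pm v
    rw [ha, this, hNv, map_smul]
    simp only [LinearMap.neg_apply]
    module
  have hEa : ρ.E a = 0 := by rw [ha, ptc ρ.E ρ.pm ρ.rel_E_pm v, hEv, map_zero]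
  have hNta : ρ.Nt a = nt • a - b := by
    have := pt ρ.Nt ρ.pm (-ρ.tm) ρ.rel_Nt_pm v
    rw [ha, this, hNtv, map_smul]
    simp only [LinearMap.neg_apply]
    module
  have hEta : ρ.Et a = 0 := by rw [ha, ptc ρ.Et ρ.pm ρ.rel_Et_pm v, hEtv, map_zero]
  have hppa : ρ.pp a = 0 := by
    have := pta ρ.pp ρ.pm ρ.E ρ.rel_pp_pm v
    rw [ha, this, hEv, hppv, map_zero, zero_sub, neg_zero]
  have hpma : ρ.pm a = 0 := by
    have := LinearMap.congr_fun ρ.rel_pm_pm v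
    simpa [ha] using this
  have htpa : ρ.tp a = 0 := by
    have := pta' ρ.pm ρ.tp ρ.Et ρ.rel_pm_tp v
    rw [ha, this, hEtv]
    rw [htpv, map_zero, sub_zero]
  have htma : ρ.tm a = c := hc.symm
  -- actions on b = ψ̃⁻v
  have hNb : ρ.N b = (n-1) • b := by
    have := pt ρ.N ρ.tm (-ρ.tm) ρ.rel_N_tm v
    rw [hb, this, hNv, map_smul]
    simp only [LinearMap.neg_apply]
    module
  have hEb : ρ.E b = 0 := by rw [hb, ptc ρ.E ρ.tm ρ.rel_E_tm v, hEv, map_zero]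
  have hNtb : ρ.Nt b = nt • b := by
    rw [hb, ptc ρ.Nt ρ.tm ρ.rel_Nt_tm v, hNtv, map_smul]
  have hEtb : ρ.Et b = 0 := by rw [hb, ptc ρ.Et ρ.tm ρ.rel_Et_tm v, hEtv, map_zero]
  have hppb : ρ.pp b = 0 := by
    have := pta ρ.pp ρ.tm ρ.Et ρ.rel_pp_tm v
    rw [hb, this, hEtv, hppv, map_zero, zero_sub, neg_zero]
  have hpmb : ρ.pm b = -c := by
    have := pta ρ.pm ρ.tm 0 ρ.rel_pm_tm v
    rw [hb, this, ← ha, ← hc]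
    simp
  have htpb : ρ.tp b = 0 := by
    have := pta ρ.tp ρ.tm 0 ρ.rel_tp_tm v
    rw [hb, this, htpv, map_zero]
    simp
  have htmb : ρ.tm b = 0 := by
    have := LinearMap.congr_fun ρ.rel_tm_tm v
    simpa [hb] using this
  -- actions on c = ψ̃⁻ψ⁻v
  have hNc : ρ.N c = (n-2) • c := by
    have := pt ρ.N ρ.tm (-ρ.tm) ρ.rel_N_tm a
    rw [hc, this, hNa, map_smul, ← hc]
    simp only [LinearMap.neg_apply, ← hc]
    module
  have hEc : ρ.E c = 0 := by rw [hc, ptc ρ.E ρ.tm ρ.rel_E_tm a, hEa, map_zero]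
  have hNtc : ρ.Nt c = nt • c := by
    rw [hc, ptc ρ.Nt ρ.tm ρ.rel_Nt_tm a, hNta, map_sub, map_smul, htmb, sub_zero, ← hc]
  have hEtc : ρ.Et c = 0 := by rw [hc, ptc ρ.Et ρ.tm ρ.rel_Et_tm a, hEta, map_zero]
  have hppc : ρ.pp c = 0 := by
    have := pta ρ.pp ρ.tm ρ.Et ρ.rel_pp_tm a
    rw [hc, this, hEta, hppa, map_zero, zero_sub, neg_zero]
  have hpmc : ρ.pm c = 0 := by
    have := pta ρ.pm ρ.tm 0 ρ.rel_pm_tm a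
    rw [hc, this, hpma, map_zero]
    simp
  have htpc : ρ.tp c = 0 := by
    have := pta ρ.tp ρ.tm 0 ρ.rel_tp_tm a
    rw [hc, this, htpa, map_zero]
    simp
  have htmc : ρ.tm c = 0 := by
    have := LinearMap.congr_fun ρ.rel_tm_tm a
    simpa [hc] using this
  set W : Submodule ℂ V := Submodule.span ℂ {a, b, c} with hW
  have haW : a ∈ W := Submodule.subset_span (by simp)
  have hbW : b ∈ W := Submodule.subset_span (by simp)
  have hcW : c ∈ W := Submodule.subset_span (by simp)
  have stab : ∀ f : V →ₗ[ℂ] V, f a ∈ W → f b ∈ W → f c ∈ W → ∀ w ∈ W, f w ∈ W := by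
    intro f h1 h2 h3
    apply map_mem_of_mem_span
    rintro x hx
    simp only [Set.mem_insert_iff, Set.mem_singleton_iff] at hx
    rcases hx with rfl | rfl | rfl
    exacts [h1, h2, h3]
  have hinvW : ρ.Invariant W := by
    intro w hw
    refine ⟨stab ρ.N ?_ ?_ ?_ w hw, stab ρ.E ?_ ?_ ?_ w hw, stab ρ.Nt ?_ ?_ ?_ w hw,
      stab ρ.Et ?_ ?_ ?_ w hw, stab ρ.pp ?_ ?_ ?_ w hw, stab ρ.pm ?_ ?_ ?_ w hw,
      stab ρ.tp ?_ ?_ ?_ w hw, stab ρ.tm ?_ ?_ ?_ w hw⟩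
    · rw [hNa]; exact W.smul_mem _ haW
    · rw [hNb]; exact W.smul_mem _ hbW
    · rw [hNc]; exact W.smul_mem _ hcW
    · rw [hEa]; exact W.zero_mem
    · rw [hEb]; exact W.zero_mem
    · rw [hEc]; exact W.zero_mem
    · rw [hNta]; exact W.sub_mem (W.smul_mem _ haW) hbW
    · rw [hNtb]; exact W.smul_mem _ hbW
    · rw [hNtc]; exact W.smul_mem _ hcW
    · rw [hEta]; exact W.zero_mem
    · rw [hEtb]; exact W.zero_mem
    · rw [hEtc]; exact W.zero_mem
    · rw [hppa]; exact W.zero_mem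
    · rw [hppb]; exact W.zero_mem
    · rw [hppc]; exact W.zero_mem
    · rw [hpma]; exact W.zero_mem
    · rw [hpmb]; exact W.neg_mem hcW
    · rw [hpmc]; exact W.zero_mem
    · rw [htpa]; exact W.zero_mem
    · rw [htpb]; exact W.zero_mem
    · rw [htpc]; exact W.zero_mem
    · rw [htma]; exact hcW
    · rw [htmb]; exact W.zero_mem
    · rw [htmc]; exact W.zero_mem
  -- the span of v, a, b, c is everything
  set S : Submodule ℂ V := Submodule.span ℂ {v, a, b, c} with hS
  have hvS : v ∈ S := Submodule.subset_span (by simp)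
  have haS : a ∈ S := Submodule.subset_span (by simp)
  have hbS : b ∈ S := Submodule.subset_span (by simp)
  have hcS : c ∈ S := Submodule.subset_span (by simp)
  have stab4 : ∀ f : V →ₗ[ℂ] V, f v ∈ S → f a ∈ S → f b ∈ S → f c ∈ S →
      ∀ w ∈ S, f w ∈ S := by
    intro f h0 h1 h2 h3
    apply map_mem_of_mem_span
    rintro x hx
    simp only [Set.mem_insert_iff, Set.mem_singleton_iff] at hx
    rcases hx with rfl | rfl | rfl | rfl
    exacts [h0, h1, h2, h3]
  have hinvS : ρ.Invariant S := by
    intro w hw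
    refine ⟨stab4 ρ.N ?_ ?_ ?_ ?_ w hw, stab4 ρ.E ?_ ?_ ?_ ?_ w hw,
      stab4 ρ.Nt ?_ ?_ ?_ ?_ w hw, stab4 ρ.Et ?_ ?_ ?_ ?_ w hw,
      stab4 ρ.pp ?_ ?_ ?_ ?_ w hw, stab4 ρ.pm ?_ ?_ ?_ ?_ w hw,
      stab4 ρ.tp ?_ ?_ ?_ ?_ w hw, stab4 ρ.tm ?_ ?_ ?_ ?_ w hw⟩
    · rw [hNv]; exact S.smul_mem _ hvS
    · rw [hNa]; exact S.smul_mem _ haS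
    · rw [hNb]; exact S.smul_mem _ hbS
    · rw [hNc]; exact S.smul_mem _ hcS
    · rw [hEv]; exact S.zero_mem
    · rw [hEa]; exact S.zero_mem
    · rw [hEb]; exact S.zero_mem
    · rw [hEc]; exact S.zero_mem
    · rw [hNtv]; exact S.smul_mem _ hvS
    · rw [hNta]; exact S.sub_mem (S.smul_mem _ haS) hbS
    · rw [hNtb]; exact S.smul_mem _ hbS
    · rw [hNtc]; exact S.smul_mem _ hcS
    · rw [hEtv]; exact S.zero_mem
    · rw [hEta]; exact S.zero_mem
    · rw [hEtb]; exact S.zero_mem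
    · rw [hEtc]; exact S.zero_mem
    · rw [hppv]; exact S.zero_mem
    · rw [hppa]; exact S.zero_mem
    · rw [hppb]; exact S.zero_mem
    · rw [hppc]; exact S.zero_mem
    · rw [← ha]; exact haS
    · rw [hpma]; exact S.zero_mem
    · rw [hpmb]; exact S.neg_mem hcS
    · rw [hpmc]; exact S.zero_mem
    · rw [htpv]; exact S.zero_mem
    · rw [htpa]; exact S.zero_mem
    · rw [htpb]; exact S.zero_mem
    · rw [htpc]; exact S.zero_mem
    · rw [← hb]; exact hbS
    · rw [htma]; exact hcS
    · rw [htmb]; exact S.zero_mem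
    · rw [htmc]; exact S.zero_mem
  have hStop : S = ⊤ := hgen S hinvS hvS
  -- basis of V
  have hrange4 : Set.range ![v, a, b, c] = {v, a, b, c} := by
    ext x
    simp [Matrix.range_cons, Matrix.range_empty]
    tauto
  have hspan4 : Submodule.span ℂ (Set.range ![v, a, b, c]) = ⊤ := by
    rw [hrange4, ← hS, hStop]
  let B : Module.Basis (Fin 4) ℂ V := Module.Basis.mk hli (le_of_eq hspan4.symm)
  haveI : FiniteDimensional ℂ V := Module.Finite.of_basis B
  have hfinV : Module.finrank ℂ V = 4 := by
    rw [Module.finrank_eq_card_basis B, Fintype.card_fin]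
  -- finrank of W
  have hli3 : LinearIndependent ℂ ![a, b, c] := by
    have h1 := hli.comp Fin.succ (Fin.succ_injective 3)
    have h2 : ![v, a, b, c] ∘ Fin.succ = ![a, b, c] := by
      funext i; fin_cases i <;> rfl
    rwa [h2] at h1
  have hrange3 : Set.range ![a, b, c] = {a, b, c} := by
    ext x
    simp [Matrix.range_cons, Matrix.range_empty]
    tauto
  have hfinW : Module.finrank ℂ W = 3 := by
    have := finrank_span_eq_card hli3
    rwa [hrange3, Fintype.card_fin, ← hW] at this
  -- W is proper
  have hWne : W ≠ ⊤ := by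
    intro hWtop
    rw [hWtop, finrank_top] at hfinW
    rw [hfinV] at hfinW
    norm_num at hfinW
  -- maximality
  have hmax : ∀ W' : Submodule ℂ V, ρ.Invariant W' → W' ≠ ⊤ → W' ≤ W := by
    intro W' hinv' hne' w hw
    obtain ⟨_, _, _, _, _, hpm', _, htm'⟩ := hinv' w hw
    obtain ⟨_, _, _, _, _, _, _, htmpm'⟩ := hinv' _ hpm'
    have hrep := B.sum_repr w
    rw [Fin.sum_univ_four] at hrep
    simp only [B, Module.Basis.mk_apply] at hrep
    simp only [Matrix.cons_val_zero, Matrix.cons_val_one, Matrix.head_cons,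
      Matrix.cons_val_two, Matrix.tail_cons, Matrix.cons_val_three] at hrep
    set α := (B.repr w) 0
    set β := (B.repr w) 1
    set γ := (B.repr w) 2
    set δ := (B.repr w) 3
    have hpmw : ρ.pm w = α • a - γ • c := by
      rw [← hrep]
      simp only [map_add, map_smul, hpma, hpmb, hpmc, ← ha]
      module
    have htmw : ρ.tm w = α • b + β • c := by
      rw [← hrep]
      simp only [map_add, map_smul, htma, htmb, htmc, ← hb]
      module
    have htmpmw : ρ.tm (ρ.pm w) = α • c := by
      rw [hpmw]
      simp only [map_sub, map_smul, htma, htmc]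
      module
    by_cases hα : α = 0
    · rw [← hrep, hα, zero_smul, zero_add]
      exact W.add_mem (W.add_mem (W.smul_mem _ haW) (W.smul_mem _ hbW)) (W.smul_mem _ hcW)
    · exfalso
      apply hne'
      rw [htmpmw] at htmpm'
      have hcW' : c ∈ W' := by
        have := W'.smul_mem α⁻¹ htmpm'
        rwa [smul_smul, inv_mul_cancel₀ hα, one_smul] at this
      rw [htmw] at htm'
      have hbW' : b ∈ W' := by
        have h1 : α • b ∈ W' := by
          have := W'.sub_mem htm' (W'.smul_mem β hcW')
          rwa [add_sub_cancel_right] at this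
        have := W'.smul_mem α⁻¹ h1
        rwa [smul_smul, inv_mul_cancel₀ hα, one_smul] at this
      rw [hpmw] at hpm'
      have haW' : a ∈ W' := by
        have h1 : α • a ∈ W' := by
          have := W'.add_mem hpm' (W'.smul_mem γ hcW')
          rwa [sub_add_cancel] at this
        have := W'.smul_mem α⁻¹ h1
        rwa [smul_smul, inv_mul_cancel₀ hα, one_smul] at this
      have hvW' : v ∈ W' := by
        have h1 : α • v ∈ W' := by
          have h2 := W'.sub_mem hw (W'.add_mem (W'.add_mem (W'.smul_mem β haW')
            (W'.smul_mem γ hbW')) (W'.smul_mem δ hcW'))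
          have h3 : w - (β • a + γ • b + δ • c) = α • v := by
            rw [← hrep]; module
          rwa [h3] at h2
        have := W'.smul_mem α⁻¹ h1
        rwa [smul_smul, inv_mul_cancel₀ hα, one_smul] at this
      exact hgen W' hinv' hvW'
  -- quotient dimension
  have hquot : Module.finrank ℂ (V ⧸ W) = 1 := by
    have := Submodule.finrank_quotient_add_finrank W
    omega
  exact ⟨hinvW, hfinW, hWne, hmax, hquot⟩
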